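/- Let σ, ρ, γ > 0, w, w₁, ..., w_m ∈ ℝ^L, and let H = convexHull{h⁽¹⁾, ..., h⁽ᴶ⁾}. Define SNIR(h) = ρ²⟨w,h⟩² / (σ² + Σᵢ ρ²⟨wᵢ,h⟩²). If ⟨w, h⁽ʲ⁾⟩ ≥ 0 and SNIR(h⁽ʲ⁾) ≥ γ for all j, then SNIR(h) ≥ γ for all h ∈ H. -/

import Mathlib

open RealInnerProductSpace

theorem stmt_12 {L m J : ℕ} (σ γ ρ : ℝ) (hσ : σ > 0) (hγ : γ > 0) (hρ : ρ > 0)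
    (w : EuclideanSpace ℝ (Fin L)) (wi : Fin m → EuclideanSpace ℝ (Fin L))
    (hv : Fin J → EuclideanSpace ℝ (Fin L))
    (hC4 : ∀ j, ⟪w, hv j⟫ ≥ 0)
    (hC1 : ∀ j, ρ ^ 2 * ⟪w, hv j⟫ ^ 2 /
      (σ ^ 2 + ∑ i, ρ ^ 2 * ⟪wi i, hv j⟫ ^ 2) ≥ γ) :
    ∀ h ∈ convexHull ℝ (Set.range hv),
      ρ ^ 2 * ⟪w, h⟫ ^ 2 / (σ ^ 2 + ∑ i, ρ ^ 2 * ⟪wi i, h⟫ ^ 2) ≥ γ := by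
  set V : EuclideanSpace ℝ (Fin L) → EuclideanSpace ℝ (Fin (m + 1)) :=
    fun x => WithLp.toLp 2 (Fin.cons σ (fun i => ρ * ⟪wi i, x⟫) : Fin (m + 1) → ℝ) with hV
  have hD : ∀ x : EuclideanSpace ℝ (Fin L),
      (0:ℝ) < σ ^ 2 + ∑ i, ρ ^ 2 * ⟪wi i, x⟫ ^ 2 := by
    intro x
    have : (0:ℝ) ≤ ∑ i, ρ ^ 2 * ⟪wi i, x⟫ ^ 2 :=
      Finset.sum_nonneg fun i _ => by positivity
    nlinarith
  have hnorm : ∀ x : EuclideanSpace ℝ (Fin L),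
      ‖V x‖ ^ 2 = σ ^ 2 + ∑ i, ρ ^ 2 * ⟪wi i, x⟫ ^ 2 := by
    intro x
    rw [EuclideanSpace.norm_eq, Real.sq_sqrt (by positivity)]
    rw [Fin.sum_univ_succ]
    simp [hV, mul_pow, sq_abs]
  set S : Set (EuclideanSpace ℝ (Fin L)) :=
    {x | Real.sqrt γ * ‖V x‖ ≤ ρ * ⟪w, x⟫} with hS
  have hsub : Set.range hv ⊆ S := by
    rintro _ ⟨j, rfl⟩
    have hDj := hD (hv j)
    have h1 : γ * (σ ^ 2 + ∑ i, ρ ^ 2 * ⟪wi i, hv j⟫ ^ 2) ≤ ρ ^ 2 * ⟪w, hv j⟫ ^ 2 :=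
      (le_div_iff₀ hDj).mp (hC1 j)
    have hl : (0:ℝ) ≤ Real.sqrt γ * ‖V (hv j)‖ := by positivity
    have hr : (0:ℝ) ≤ ρ * ⟪w, hv j⟫ := mul_nonneg hρ.le (hC4 j)
    have hsq : (Real.sqrt γ * ‖V (hv j)‖) ^ 2 ≤ (ρ * ⟪w, hv j⟫) ^ 2 := by
      rw [mul_pow, mul_pow, Real.sq_sqrt hγ.le, hnorm]
      exact h1
    have := Real.sqrt_le_sqrt hsq
    rwa [Real.sqrt_sq hl, Real.sqrt_sq hr] at this
  have hconv : Convex ℝ S := by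
    intro x hx y hy a b ha hb hab
    have hVaff : V (a • x + b • y) = a • V x + b • V y := by
      ext k
      refine Fin.cases ?_ ?_ k
      · simp only [hV, PiLp.toLp_apply, Fin.cons_zero, PiLp.add_apply, PiLp.smul_apply, smul_eq_mul]
        nlinarith [hab]
      · intro i
        simp only [hV, PiLp.toLp_apply, Fin.cons_succ, PiLp.add_apply, PiLp.smul_apply, smul_eq_mul,
          inner_add_right, real_inner_smul_right]
        ring
    have htri : ‖V (a • x + b • y)‖ ≤ a * ‖V x‖ + b * ‖V y‖ := by
      rw [hVaff]
      calc ‖a • V x + b • V y‖ ≤ ‖a • V x‖ + ‖b • V y‖ := norm_add_le _ _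
        _ = a * ‖V x‖ + b * ‖V y‖ := by
            rw [norm_smul, norm_smul, Real.norm_of_nonneg ha, Real.norm_of_nonneg hb]
    have hx' : Real.sqrt γ * ‖V x‖ ≤ ρ * ⟪w, x⟫ := hx
    have hy' : Real.sqrt γ * ‖V y‖ ≤ ρ * ⟪w, y⟫ := hy
    show Real.sqrt γ * ‖V (a • x + b • y)‖ ≤ ρ * ⟪w, a • x + b • y⟫
    rw [inner_add_right, real_inner_smul_right, real_inner_smul_right]
    have hs : (0:ℝ) ≤ Real.sqrt γ := Real.sqrt_nonneg _
    nlinarith [mul_le_mul_of_nonneg_left htri hs,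
      mul_le_mul_of_nonneg_left hx' ha, mul_le_mul_of_nonneg_left hy' hb]
  intro h hh
  have hhS : h ∈ S := convexHull_min hsub hconv hh
  have hl : (0:ℝ) ≤ Real.sqrt γ * ‖V h‖ := by positivity
  have hr : (0:ℝ) ≤ ρ * ⟪w, h⟫ := le_trans hl hhS
  have hsq : (Real.sqrt γ * ‖V h‖) ^ 2 ≤ (ρ * ⟪w, h⟫) ^ 2 :=
    pow_le_pow_left₀ hl hhS 2
  rw [mul_pow, mul_pow, Real.sq_sqrt hγ.le, hnorm] at hsq
  exact (le_div_iff₀ (hD h)).mpr hsq
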